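/- For all positive integers l and k, l divides M_l(k), where M_l(k) = Σ_{j=0}^{l-1} (-1)^j * binom(2l, j) * (l - j)^{2k}. -/

import Mathlib

theorem stmt_2 (l k : ℕ) (hl : 0 < l) (hk : 0 < k) :
    (l : ℤ) ∣ ∑ j ∈ Finset.range l,
      (-1 : ℤ) ^ j * ((2 * l).choose j : ℤ) * ((l : ℤ) - (j : ℤ)) ^ (2 * k) := by
  apply Finset.dvd_sum
  intro j hj
  rcases Nat.eq_zero_or_pos j with rfl | hjpos
  · simp only [pow_zero, one_mul, Nat.choose_zero_right, Nat.cast_one, Nat.cast_zero, sub_zero]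
    exact dvd_pow_self _ (by omega)
  · -- key identity: j * C(2l, j) = 2l * C(2l-1, j-1)
    have keyN : j * ((2 * l).choose j) = 2 * l * ((2 * l - 1).choose (j - 1)) := by
      have h := Nat.add_one_mul_choose_eq (2 * l - 1) (j - 1)
      have h1 : 2 * l - 1 + 1 = 2 * l := by omega
      have h2 : j - 1 + 1 = j := by omega
      rw [h1, h2] at h
      exact (Nat.mul_comm j _).trans h.symm
    have key : (j : ℤ) * ((2 * l).choose j : ℤ) = 2 * l * ((2 * l - 1).choose (j - 1) : ℤ) := by
      exact_mod_cast congrArg (Nat.cast : ℕ → ℤ) keyN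
    have hdvd : (l : ℤ) ∣ ((2 * l).choose j : ℤ) * ((l : ℤ) - (j : ℤ)) := by
      have h3 : ((2 * l).choose j : ℤ) * ((l : ℤ) - (j : ℤ))
          = l * (((2 * l).choose j : ℤ) - 2 * ((2 * l - 1).choose (j - 1) : ℤ)) := by
        linear_combination -key
      rw [h3]
      exact Dvd.intro _ rfl
    have hexp : 2 * k = 2 * k - 1 + 1 := by omega
    rw [hexp, pow_succ, ← mul_assoc]
    have h4 : (-1 : ℤ) ^ j * ((2 * l).choose j : ℤ) * ((l : ℤ) - (j : ℤ)) ^ (2 * k - 1) * ((l : ℤ) - (j : ℤ))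
        = (-1 : ℤ) ^ j * ((l : ℤ) - (j : ℤ)) ^ (2 * k - 1) * (((2 * l).choose j : ℤ) * ((l : ℤ) - (j : ℤ))) := by
      ring
    rw [h4]
    exact hdvd.mul_left _
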